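/- The QSD μ_{n,1} of the voter model on the star graph K_{n,1} satisfies the nonlocal recurrence (k/n - γ_{n,1}/(n+1))·μ_{n,1}(k,0) = μ_{n,1}(k+1,0)·(k+1)/(n+1) + μ_{n,1}(n-k,0)·(n-k)/(n(n+1)) for 1 ≤ k ≤ n-1, where γ_{n,1} = 2(1 - √(1/2 - 1/(2n))); in particular μ_{n,1}(n-1,0) = γ_{n,1}/(2(n² - n γ_{n,1} - 1)). -/

import Mathlib

/-- `μ` together with eigenvalue `l` is the (unique) quasi-stationary distribution of the
2-opinion voter model on the complete bipartite graph `K_{n,m}`, tracked by the pair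
`(k,h)` of 'yes' counts in the parts of sizes `n` and `m`.  `μ` is extended by `0` outside
the grid `{0,…,n}×{0,…,m}`; the absorbing states `(0,0),(n,m)` and the unreachable states
`(0,m),(n,0)` carry zero mass; `μ` is a probability vector satisfying the left-eigenvector
equation with eigenvalue `l`, and is invariant under relabeling of the two opinions. -/
structure IsBipartiteVoterQSD (n m : ℕ) (μ : ℤ → ℤ → ℝ) (l : ℝ) : Prop where
  nonneg : ∀ k h : ℤ, 0 ≤ μ k h
  zero_outside : ∀ k h : ℤ, (k < 0 ∨ (n : ℤ) < k ∨ h < 0 ∨ (m : ℤ) < h) → μ k h = 0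
  zero_corner₁ : μ 0 0 = 0
  zero_corner₂ : μ n m = 0
  zero_bp₁ : μ 0 m = 0
  zero_bp₂ : μ n 0 = 0
  sum_one : ∑ k ∈ Finset.Icc (0 : ℤ) n, ∑ h ∈ Finset.Icc (0 : ℤ) m, μ k h = 1
  symm : ∀ k h : ℤ, μ k h = μ (n - k) (m - h)
  eigen : ∀ k h : ℤ, 0 ≤ k → k ≤ n → 0 ≤ h → h ≤ m →
    ¬(k = 0 ∧ h = 0) → ¬(k = n ∧ h = m) →
    l * μ k h
      = μ k h * (((k : ℝ) * h + ((n : ℝ) - k) * ((m : ℝ) - h)) / ((n : ℝ) * m))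
        + μ (k - 1) h * ((((n : ℝ) - k + 1) * h) / ((m : ℝ) * ((n : ℝ) + m)))
        + μ (k + 1) h * ((((k : ℝ) + 1) * ((m : ℝ) - h)) / ((m : ℝ) * ((n : ℝ) + m)))
        + μ k (h - 1) * ((((m : ℝ) - h + 1) * k) / ((n : ℝ) * ((n : ℝ) + m)))
        + μ k (h + 1) * ((((h : ℝ) + 1) * ((n : ℝ) - k)) / ((n : ℝ) * ((n : ℝ) + m)))


/-- The QSD `μ_{n,1}` of the voter model on the star `K_{n,1}` satisfies the nonlocal
recurrence `(k/n - γ/(n+1)) μ(k,0) = μ(k+1,0)(k+1)/(n+1) + μ(n-k,0)(n-k)/(n(n+1))`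
for `1 ≤ k ≤ n-1`, where `γ = γ_{n,1} = 2(1 - √(1/2 - 1/(2n)))`; in particular
`μ_{n,1}(n-1,0) = γ/(2(n² - nγ - 1))`. -/
theorem star_qsd_recurrence (n : ℕ) (hn : 3 ≤ n) (μ : ℤ → ℤ → ℝ)
    (γ : ℝ) (hγ : γ = 2 * (1 - Real.sqrt (1 / 2 - 1 / (2 * (n : ℝ)))))
    (hμ : IsBipartiteVoterQSD n 1 μ (1 - γ / ((n : ℝ) + 1)))
    (hμ10 : μ 1 0 = γ / 2) :
    (∀ k : ℤ, 1 ≤ k → k ≤ (n : ℤ) - 1 →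
      ((k : ℝ) / n - γ / ((n : ℝ) + 1)) * μ k 0
        = μ (k + 1) 0 * (((k : ℝ) + 1) / ((n : ℝ) + 1))
          + μ ((n : ℤ) - k) 0 * (((n : ℝ) - k) / ((n : ℝ) * ((n : ℝ) + 1)))) ∧
    μ ((n : ℤ) - 1) 0 = γ / (2 * ((n : ℝ) ^ 2 - (n : ℝ) * γ - 1)) := by
  have hn' : (3 : ℝ) ≤ n := by exact_mod_cast hn
  have hn0 : (n : ℝ) ≠ 0 := by linarith
  have hn1 : (n : ℝ) + 1 ≠ 0 := by linarith
  have hrec : ∀ k : ℤ, 1 ≤ k → k ≤ (n : ℤ) - 1 →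
      ((k : ℝ) / n - γ / ((n : ℝ) + 1)) * μ k 0
        = μ (k + 1) 0 * (((k : ℝ) + 1) / ((n : ℝ) + 1))
          + μ ((n : ℤ) - k) 0 * (((n : ℝ) - k) / ((n : ℝ) * ((n : ℝ) + 1))) := by
    intro k hk1 hk2
    have key := hμ.eigen k 0 (by linarith) (by omega) le_rfl (by norm_num)
      (by rintro ⟨h1, -⟩; omega) (by rintro ⟨-, h2⟩; norm_num at h2)
    have hsy := hμ.symm k (0 + 1)
    norm_num at hsy
    rw [hμ.zero_outside k (0 - 1) (by norm_num), show (0:ℤ) + 1 = 1 from rfl, hsy] at key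
    push_cast at key
    have hinv : (n : ℝ) * ((n : ℝ))⁻¹ = 1 := mul_inv_cancel₀ hn0
    linear_combination key + μ k 0 * hinv
  refine ⟨hrec, ?_⟩
  have h2 : γ ≤ 2 := by
    rw [hγ]; nlinarith [Real.sqrt_nonneg (1 / 2 - 1 / (2 * (n : ℝ)))]
  have hden : 0 < (n : ℝ) ^ 2 - (n : ℝ) * γ - 1 := by nlinarith
  have hr := hrec ((n : ℤ) - 1) (by omega) (by omega)
  have e1 : (n : ℤ) - 1 + 1 = (n : ℤ) := by ring
  have e2 : (n : ℤ) - ((n : ℤ) - 1) = 1 := by ring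
  rw [e1, e2, hμ.zero_bp₂, hμ10] at hr
  push_cast at hr
  rw [eq_div_iff (by positivity)]
  field_simp at hr
  have hz : (μ ((n : ℤ) - 1) 0 * (2 * ((n : ℝ) ^ 2 - (n : ℝ) * γ - 1)) - γ) * ((n : ℝ) * ((n : ℝ) + 1)) = 0 := by
    linear_combination ((n : ℝ) * ((n : ℝ) + 1)) * hr
  have := (mul_eq_zero.mp hz).resolve_right (by positivity)
  linarith
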